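/- Suppose in addition that C and D are cocomplete, that T and S preserve reflexive coequalizers, that F preserves all small colimits, and that F is a left adjoint (admits a right adjoint). Then the lifted functor F̄ : Alg T ⥤ Alg S (sending (X, ψ) to (F X, F(ψ) ∘ φ_X)) is a left adjoint. -/

import Mathlib

open CategoryTheory CategoryTheory.Limits

universe v₁ v₂ u₁ u₂

variable {C : Type u₁} [Category.{v₁} C] {D : Type u₂} [Category.{v₁} D]

/-- The lifted functor `F̄ : Alg T ⥤ Alg S` induced by a functor `F : C ⥤ D` together with a
natural isomorphism `φ_X : S(F X) ≅ F(T X)` compatible with the monad structures; it sends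
`(X, ψ)` to `(F X, F(ψ) ∘ φ_X)` and `f` to `F(f)`. -/
def MonadCompat.lift (T : Monad C) (S : Monad D) (F : C ⥤ D)
    (φ : F ⋙ (S : D ⥤ D) ≅ (T : C ⥤ C) ⋙ F)
    (hη : ∀ X : C, S.η.app (F.obj X) ≫ φ.hom.app X = F.map (T.η.app X))
    (hμ : ∀ X : C, S.μ.app (F.obj X) ≫ φ.hom.app X =
      (S : D ⥤ D).map (φ.hom.app X) ≫ φ.hom.app ((T : C ⥤ C).obj X) ≫ F.map (T.μ.app X)) :
    Monad.Algebra T ⥤ Monad.Algebra S where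
  obj A :=
    { A := F.obj A.A
      a := φ.hom.app A.A ≫ F.map A.a
      unit := by
        rw [← Category.assoc, hη, ← F.map_comp, A.unit]
        simp
      assoc := by
        have nat := φ.hom.naturality A.a
        simp only [Functor.comp_map] at nat
        calc S.μ.app (F.obj A.A) ≫ φ.hom.app A.A ≫ F.map A.a
            = (S.μ.app (F.obj A.A) ≫ φ.hom.app A.A) ≫ F.map A.a := by
              rw [Category.assoc]
          _ = ((S : D ⥤ D).map (φ.hom.app A.A) ≫ φ.hom.app ((T : C ⥤ C).obj A.A) ≫
                F.map (T.μ.app A.A)) ≫ F.map A.a := by rw [hμ]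
          _ = (S : D ⥤ D).map (φ.hom.app A.A) ≫ φ.hom.app ((T : C ⥤ C).obj A.A) ≫
                F.map (T.μ.app A.A ≫ A.a) := by
              simp only [Category.assoc, F.map_comp]
          _ = (S : D ⥤ D).map (φ.hom.app A.A) ≫ φ.hom.app ((T : C ⥤ C).obj A.A) ≫
                F.map ((T : C ⥤ C).map A.a ≫ A.a) := by rw [A.assoc]
          _ = (S : D ⥤ D).map (φ.hom.app A.A) ≫ (φ.hom.app ((T : C ⥤ C).obj A.A) ≫
                F.map ((T : C ⥤ C).map A.a)) ≫ F.map A.a := by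
              simp only [Category.assoc, F.map_comp]
          _ = (S : D ⥤ D).map (φ.hom.app A.A) ≫ ((S : D ⥤ D).map (F.map A.a) ≫
                φ.hom.app A.A) ≫ F.map A.a := by rw [nat]
          _ = (S : D ⥤ D).map (φ.hom.app A.A ≫ F.map A.a) ≫ φ.hom.app A.A ≫ F.map A.a := by
              simp only [Category.assoc, Functor.map_comp] }
  map {A B} f :=
    { f := F.map f.f
      h := by
        have nat := φ.hom.naturality f.f
        simp only [Functor.comp_map] at nat
        calc (S : D ⥤ D).map (F.map f.f) ≫ φ.hom.app B.A ≫ F.map B.a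
            = ((S : D ⥤ D).map (F.map f.f) ≫ φ.hom.app B.A) ≫ F.map B.a := by
              rw [Category.assoc]
          _ = φ.hom.app A.A ≫ F.map ((T : C ⥤ C).map f.f) ≫ F.map B.a := by
              rw [nat, Category.assoc]
          _ = φ.hom.app A.A ≫ F.map ((T : C ⥤ C).map f.f ≫ B.a) := by
              rw [F.map_comp]
          _ = φ.hom.app A.A ≫ F.map (A.a ≫ f.f) := by rw [f.h]
          _ = (φ.hom.app A.A ≫ F.map A.a) ≫ F.map f.f := by
              rw [F.map_comp, Category.assoc] }
  map_id A := by
    apply Monad.Algebra.Hom.ext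
    simp
  map_comp f g := by
    apply Monad.Algebra.Hom.ext
    simp

namespace MonadCompatAux

variable (T : Monad C) (S : Monad D) {F : C ⥤ D} {G : D ⥤ C} (adj : F ⊣ G)
  (φ : F ⋙ (S : D ⥤ D) ≅ (T : C ⥤ C) ⋙ F)

/-- The transpose of the algebra structure map of `Ḡ B`. -/
def β (B : Monad.Algebra S) : F.obj ((T : C ⥤ C).obj (G.obj B.A)) ⟶ B.A :=
  φ.inv.app (G.obj B.A) ≫ (S : D ⥤ D).map (adj.counit.app B.A) ≫ B.a

lemma flat_comp {X : C} (B : Monad.Algebra S) (u : X ⟶ G.obj B.A) :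
    (adj.homEquiv _ _).symm ((T : C ⥤ C).map u ≫ adj.homEquiv _ _ (β T S adj φ B)) =
      φ.inv.app X ≫ (S : D ⥤ D).map ((adj.homEquiv _ _).symm u) ≫ B.a := by
  rw [Adjunction.homEquiv_naturality_left_symm, Equiv.symm_apply_apply]
  have nat := φ.inv.naturality u
  simp only [Functor.comp_map] at nat
  rw [β, ← Category.assoc, nat, Adjunction.homEquiv_counit]
  simp [-Adjunction.homEquiv_counit]

lemma hμ' (hμ : ∀ X : C, S.μ.app (F.obj X) ≫ φ.hom.app X =
      (S : D ⥤ D).map (φ.hom.app X) ≫ φ.hom.app ((T : C ⥤ C).obj X) ≫ F.map (T.μ.app X))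
    (X : C) :
    F.map (T.μ.app X) ≫ φ.inv.app X =
      φ.inv.app ((T : C ⥤ C).obj X) ≫ (S : D ⥤ D).map (φ.inv.app X) ≫ S.μ.app (F.obj X) := by
  rw [← cancel_mono (φ.hom.app X)]
  simp only [Category.assoc, hμ X]
  simp [← Functor.map_comp_assoc]

/-- The lifted right adjoint `Ḡ : Alg S ⥤ Alg T`. -/
def Gbar (hη : ∀ X : C, S.η.app (F.obj X) ≫ φ.hom.app X = F.map (T.η.app X))
    (hμ : ∀ X : C, S.μ.app (F.obj X) ≫ φ.hom.app X =
      (S : D ⥤ D).map (φ.hom.app X) ≫ φ.hom.app ((T : C ⥤ C).obj X) ≫ F.map (T.μ.app X)) :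
    Monad.Algebra S ⥤ Monad.Algebra T where
  obj B :=
    { A := G.obj B.A
      a := adj.homEquiv _ _ (β T S adj φ B)
      unit := by
        apply (adj.homEquiv _ _).symm.injective
        rw [Adjunction.homEquiv_naturality_left_symm, Equiv.symm_apply_apply]
        simp only [Adjunction.homEquiv_counit, Functor.map_id, Category.id_comp]
        rw [β, ← Category.assoc, ← hη]
        have nat : S.η.app (F.obj (G.obj B.A)) ≫ (S : D ⥤ D).map (adj.counit.app B.A) =
            adj.counit.app B.A ≫ S.η.app B.A := (S.η.naturality (adj.counit.app B.A)).symm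
        simp [nat, (reassoc_of% nat), B.unit]
      assoc := by
        apply (adj.homEquiv _ _).symm.injective
        show (adj.homEquiv ((T : C ⥤ C).obj ((T : C ⥤ C).obj (G.obj B.A))) B.A).symm _ =
          (adj.homEquiv ((T : C ⥤ C).obj ((T : C ⥤ C).obj (G.obj B.A))) B.A).symm _
        rw [flat_comp T S adj φ B, Adjunction.homEquiv_naturality_left_symm,
          Equiv.symm_apply_apply]
        conv_lhs => rw [β, ← Category.assoc, hμ' T S φ hμ]
        have natμ : (S : D ⥤ D).map ((S : D ⥤ D).map (adj.counit.app B.A)) ≫ S.μ.app B.A =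
            S.μ.app (F.obj (G.obj B.A)) ≫ (S : D ⥤ D).map (adj.counit.app B.A) :=
          S.μ.naturality (adj.counit.app B.A)
        simp only [β, Functor.map_comp, Category.assoc, ← B.assoc, (reassoc_of% natμ)] }
  map {B B'} f :=
    { f := G.map f.f
      h := by
        apply (adj.homEquiv _ _).symm.injective
        rw [flat_comp T S adj φ B', Adjunction.homEquiv_naturality_right_symm]
        dsimp only
        simp only [Equiv.symm_apply_apply]
        rw [Adjunction.homEquiv_counit]
        have natε : F.map (G.map f.f) ≫ adj.counit.app B'.A =
            adj.counit.app B.A ≫ f.f := adj.counit.naturality f.f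
        rw [natε, β]
        simp only [Functor.map_comp, Category.assoc, f.h] }
  map_id B := by
    apply Monad.Algebra.Hom.ext
    simp
  map_comp f g := by
    apply Monad.Algebra.Hom.ext
    simp

/-- The lifted adjunction `F̄ ⊣ Ḡ`. -/
def liftAdj (hη : ∀ X : C, S.η.app (F.obj X) ≫ φ.hom.app X = F.map (T.η.app X))
    (hμ : ∀ X : C, S.μ.app (F.obj X) ≫ φ.hom.app X =
      (S : D ⥤ D).map (φ.hom.app X) ≫ φ.hom.app ((T : C ⥤ C).obj X) ≫ F.map (T.μ.app X)) :
    MonadCompat.lift T S F φ hη hμ ⊣ Gbar T S adj φ hη hμ :=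
  Adjunction.mkOfHomEquiv
    { homEquiv := fun A B =>
        { toFun := fun f =>
            { f := adj.homEquiv _ _ f.f
              h := by
                apply (adj.homEquiv _ _).symm.injective
                show (adj.homEquiv _ _).symm ((T : C ⥤ C).map (adj.homEquiv A.A B.A f.f) ≫
                    adj.homEquiv _ _ (β T S adj φ B)) =
                  (adj.homEquiv _ _).symm (A.a ≫ adj.homEquiv A.A B.A f.f)
                rw [flat_comp T S adj φ B]
                erw [Equiv.symm_apply_apply]
                rw [Adjunction.homEquiv_naturality_left_symm]
                erw [Equiv.symm_apply_apply]
                have := f.h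
                dsimp [MonadCompat.lift] at this
                rw [this]
                simp
            }
          invFun := fun g =>
            { f := (adj.homEquiv _ _).symm g.f
              h := by
                have hg : (T : C ⥤ C).map g.f ≫
                    adj.homEquiv ((T : C ⥤ C).obj (G.obj B.A)) B.A (β T S adj φ B) =
                    A.a ≫ g.f := g.h
                have := congrArg (adj.homEquiv ((T : C ⥤ C).obj A.A) B.A).symm hg
                erw [flat_comp T S adj φ B,
                  Adjunction.homEquiv_naturality_left_symm] at this
                dsimp [MonadCompat.lift]
                rw [Category.assoc, ← this]
                simp
            }
          left_inv := fun f => by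
            apply Monad.Algebra.Hom.ext
            simp
            exact (adj.homEquiv A.A B.A).symm_apply_apply f.f
          right_inv := fun g => by
            apply Monad.Algebra.Hom.ext
            simp
            exact (adj.homEquiv A.A B.A).apply_symm_apply g.f }
      homEquiv_naturality_left_symm := fun f g => by
        apply Monad.Algebra.Hom.ext
        exact adj.homEquiv_naturality_left_symm f.f g.f
      homEquiv_naturality_right := fun f g => by
        apply Monad.Algebra.Hom.ext
        exact adj.homEquiv_naturality_right f.f g.f }

end MonadCompatAux

/-- If moreover `C` and `D` are cocomplete, the monads `T` and `S` preserve
reflexive coequalizers, `F` preserves all small colimits, and `F` is a left adjoint, then the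
lifted functor `F̄ : Alg T ⥤ Alg S` is a left adjoint. -/
theorem lift_isLeftAdjoint
    [HasColimits C] [HasColimits D]
    (T : Monad C) (S : Monad D) (F : C ⥤ D)
    (hT : ∀ ⦃X Y : C⦄ (p q : X ⟶ Y), IsReflexivePair p q →
      Nonempty (PreservesColimit (parallelPair p q) (T : C ⥤ C)))
    (hS : ∀ ⦃X Y : D⦄ (p q : X ⟶ Y), IsReflexivePair p q →
      Nonempty (PreservesColimit (parallelPair p q) (S : D ⥤ D)))
    [PreservesColimits F] [F.IsLeftAdjoint]
    (φ : F ⋙ (S : D ⥤ D) ≅ (T : C ⥤ C) ⋙ F)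
    (hη : ∀ X : C, S.η.app (F.obj X) ≫ φ.hom.app X = F.map (T.η.app X))
    (hμ : ∀ X : C, S.μ.app (F.obj X) ≫ φ.hom.app X =
      (S : D ⥤ D).map (φ.hom.app X) ≫ φ.hom.app ((T : C ⥤ C).obj X) ≫ F.map (T.μ.app X)) :
    (MonadCompat.lift T S F φ hη hμ).IsLeftAdjoint := by
  exact (MonadCompatAux.liftAdj T S (Adjunction.ofIsLeftAdjoint F) φ hη hμ).isLeftAdjoint
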